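/- Let r ≥ 1, k ≥ 1, and l ≥ 2. Suppose G is an n-vertex graph with no k pairwise vertex-disjoint cycles of length 2l+1, L is the vertex set of a maximum collection of disjoint (2l+1)-cycles in G, and G'_R is the graph on V(G)\L whose edges are those pairs xy such that x and y have at least k common neighbors in L. Then G'_R contains no k pairwise vertex-disjoint cycles of length 2l. -/

import Mathlib

open SimpleGraph

universe u v

/-- An (injective) copy of the graph `F` inside the graph `G`. -/
structure GraphCopy {α : Type u} {β : Type v} (F : SimpleGraph α) (G : SimpleGraph β) where
  toFun : α → β
  inj : Function.Injective toFun
  adj : ∀ {a b : α}, F.Adj a b → G.Adj (toFun a) (toFun b)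

/-- `G` contains a copy of `F` (i.e. a subgraph isomorphic to `F`). -/
def Contains {α : Type u} {β : Type v} (F : SimpleGraph α) (G : SimpleGraph β) : Prop :=
  Nonempty (GraphCopy F G)

/-- `G` contains `k` pairwise vertex-disjoint copies of `F`. -/
def HasDisjCopies {α : Type u} {β : Type v} (F : SimpleGraph α) (G : SimpleGraph β)
    (k : ℕ) : Prop :=
  ∃ c : Fin k → GraphCopy F G,
    ∀ i j : Fin k, i ≠ j → Disjoint (Set.range (c i).toFun) (Set.range (c j).toFun)

/-- The join of two graphs: their disjoint union together with all cross edges. -/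
def gJoin {α : Type u} {β : Type v} (G : SimpleGraph α) (H : SimpleGraph β) :
    SimpleGraph (α ⊕ β) where
  Adj x y :=
    match x, y with
    | Sum.inl a, Sum.inl b => G.Adj a b
    | Sum.inr a, Sum.inr b => H.Adj a b
    | _, _ => True
  symm := by constructor; rintro (a | a) (b | b) h <;> first | exact h.symm | trivial
  loopless := by constructor; rintro (a | a) h; exacts [G.loopless.irrefl a h, H.loopless.irrefl a h]

/-- The Turán number: maximum number of edges of an `n`-vertex `F`-free graph. -/
noncomputable def exNum {α : Type u} (n : ℕ) (F : SimpleGraph α) : ℕ :=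
  sSup {m : ℕ | ∃ G : SimpleGraph (Fin n), ¬ Contains F G ∧ m = G.edgeSet.ncard}

/-- The number of (unlabeled) copies of `H` in `G`, i.e. the number of subgraphs of `G`
isomorphic to `H`. -/
noncomputable def copyCount {α : Type u} {β : Type v} (H : SimpleGraph α)
    (G : SimpleGraph β) : ℕ :=
  {A : G.Subgraph | Nonempty (H ≃g A.coe)}.ncard

/-- The generalized Turán number: maximum number of copies of `H` in an
`n`-vertex `F`-free graph. -/
noncomputable def exGen {α : Type u} {γ : Type v} (n : ℕ) (H : SimpleGraph α)
    (F : SimpleGraph γ) : ℕ :=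
  sSup {m : ℕ | ∃ G : SimpleGraph (Fin n), ¬ Contains F G ∧ m = copyCount H G}

/-- `s` is a matching in `G`: a set of edges of `G`, pairwise vertex-disjoint. -/
def IsMatchingSet {V : Type u} (G : SimpleGraph V) (s : Finset (Sym2 V)) : Prop :=
  ↑s ⊆ G.edgeSet ∧ ∀ e ∈ s, ∀ f ∈ s, e ≠ f → ∀ x : V, x ∈ e → x ∉ f

/-- The number of matchings of size `l` in `G`. -/
noncomputable def matchCount {V : Type u} (G : SimpleGraph V) (l : ℕ) : ℕ :=
  {s : Finset (Sym2 V) | s.card = l ∧ IsMatchingSet G s}.ncard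

/-- `G` contains `k` pairwise vertex-disjoint triangles. -/
def HasDisjTriangles {V : Type u} (G : SimpleGraph V) (k : ℕ) : Prop :=
  ∃ S : Finset (Finset V), S.card = k ∧ (∀ T ∈ S, G.IsNClique 3 T) ∧
    (S : Set (Finset V)).Pairwise fun T T' => Disjoint T T'

/-- The number of copies of `lK₃` (families of `l` pairwise disjoint triangles) in `G`. -/
noncomputable def disjTriFamCount {V : Type u} (G : SimpleGraph V) (l : ℕ) : ℕ :=
  {S : Finset (Finset V) | S.card = l ∧ (∀ T ∈ S, G.IsNClique 3 T) ∧
    (S : Set (Finset V)).Pairwise fun T T' => Disjoint T T'}.ncard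

/-- The graph on the complement of `L` whose edges are the edges `xy` of `G` such that
`x` and `y` have at least `k` common neighbors inside `L`. -/
def commonNbrGraph {V : Type u} (G : SimpleGraph V) (L : Set V) (k : ℕ) :
    SimpleGraph ↥(Lᶜ) where
  Adj x y := G.Adj x.val y.val ∧
    k ≤ {v : V | v ∈ L ∧ G.Adj x.val v ∧ G.Adj y.val v}.ncard
  symm := by
    constructor
    rintro x y ⟨h1, h2⟩
    refine ⟨h1.symm, ?_⟩
    have hset : {v : V | v ∈ L ∧ G.Adj y.val v ∧ G.Adj x.val v} =
        {v : V | v ∈ L ∧ G.Adj x.val v ∧ G.Adj y.val v} := by ext v; simp only [Set.mem_setOf_eq]; tauto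
    rw [hset]; exact h2
  loopless := by constructor; rintro x ⟨h, -⟩; exact G.loopless.irrefl _ h

lemma fin_one_val (n : ℕ) : ((1 : Fin (n + 2)) : ℕ) = 1 := by
  rw [Fin.val_one']; exact Nat.mod_eq_of_lt (by omega)

lemma cyc_adj_iff {n : ℕ} {u v : Fin (n + 2)} :
    (cycleGraph (n + 2)).Adj u v ↔ u = v + 1 ∨ v = u + 1 := by
  rw [cycleGraph_adj]
  have h : ∀ a b : Fin (n + 2), a - b = 1 ↔ a = b + 1 := by
    intro a b
    rw [sub_eq_iff_eq_add, add_comm 1 b]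
  rw [h, h]

lemma exists_distinct_reps {V : Type u} [Fintype V] {k : ℕ} (S : Fin k → Set V)
    (hS : ∀ i, k ≤ (S i).ncard) :
    ∃ f : Fin k → V, Function.Injective f ∧ ∀ i, f i ∈ S i := by
  classical
  have hall : ∀ s : Finset (Fin k),
      s.card ≤ (s.biUnion fun i => (S i).toFinset).card := by
    intro s
    rcases s.eq_empty_or_nonempty with rfl | ⟨i, hi⟩
    · simp
    · calc s.card ≤ k := (Finset.card_le_univ s).trans (by simp)
        _ ≤ (S i).ncard := hS i
        _ = (S i).toFinset.card := Set.ncard_eq_toFinset_card' _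
        _ ≤ (s.biUnion fun i => (S i).toFinset).card :=
            Finset.card_le_card (Finset.subset_biUnion_of_mem (fun i => (S i).toFinset) hi)
  obtain ⟨f, hf, hmem⟩ := (Finset.all_card_le_biUnion_card_iff_exists_injective
      (fun i : Fin k => (S i).toFinset)).mp hall
  exact ⟨f, hf, fun i => by simpa using hmem i⟩

lemma cyc_adj_iff' {m : ℕ} (hm : 2 ≤ m) {u v : Fin m} :
    (cycleGraph m).Adj u v ↔ (v : ℕ) = ((u : ℕ) + 1) % m ∨ (u : ℕ) = ((v : ℕ) + 1) % m := by
  obtain ⟨n, rfl⟩ : ∃ n, m = n + 2 := ⟨m - 2, by omega⟩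
  rw [cyc_adj_iff]
  have h : ∀ a b : Fin (n + 2), a = b + 1 ↔ (a : ℕ) = ((b : ℕ) + 1) % (n + 2) := by
    intro a b
    rw [Fin.ext_iff, Fin.val_add, fin_one_val]
  rw [h, h]
  tauto

/-- If `G` has no `k` disjoint `(2l+1)`-cycles and `L` is the vertex set
of a maximum family of disjoint `(2l+1)`-cycles, then the auxiliary graph on `V∖L` has
no `k` disjoint `2l`-cycles. -/
theorem stmt16 {V : Type u} [Fintype V] (G : SimpleGraph V) (r k l : ℕ)
    (hk : 1 ≤ k) (hl : 2 ≤ l)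
    (hfree : ¬ HasDisjCopies (cycleGraph (2 * l + 1)) G k)
    (c : Fin r → GraphCopy (cycleGraph (2 * l + 1)) G)
    (hdisj : ∀ i j : Fin r, i ≠ j →
      Disjoint (Set.range (c i).toFun) (Set.range (c j).toFun))
    (hmax : ¬ HasDisjCopies (cycleGraph (2 * l + 1)) G (r + 1)) :
    ¬ HasDisjCopies (cycleGraph (2 * l))
        (commonNbrGraph G (⋃ i : Fin r, Set.range (c i).toFun) k) k := by
  classical
  set L : Set V := ⋃ i : Fin r, Set.range (c i).toFun with hLdef
  intro hcon
  obtain ⟨d, hd⟩ := hcon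
  have h2l : 2 ≤ 2 * l := by omega
  have h0 : 0 < 2 * l := by omega
  have hlast : 2 * l - 1 < 2 * l := by omega
  have hadj : ∀ i, (commonNbrGraph G L k).Adj
      ((d i).toFun ⟨2 * l - 1, hlast⟩) ((d i).toFun ⟨0, h0⟩) := by
    intro i
    apply (d i).adj
    rw [cyc_adj_iff' h2l]
    left
    show (0 : ℕ) = (2 * l - 1 + 1) % (2 * l)
    have h1 : 2 * l - 1 + 1 = 2 * l := by omega
    rw [h1, Nat.mod_self]
  set S : Fin k → Set V := fun i => {v : V | v ∈ L ∧
      G.Adj ((d i).toFun ⟨2 * l - 1, hlast⟩).val v ∧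
      G.Adj ((d i).toFun ⟨0, h0⟩).val v} with hSdef
  have hScard : ∀ i, k ≤ (S i).ncard := fun i => (hadj i).2
  obtain ⟨f, hfinj, hfS⟩ := exists_distinct_reps S hScard
  have hfL : ∀ i, f i ∈ L := fun i => (hfS i).1
  have hnotL : ∀ i (x : Fin (2 * l)), ((d i).toFun x).val ∉ L :=
    fun i x => ((d i).toFun x).2
  set F : Fin k → Fin (2 * l + 1) → V := fun i j =>
    if h : (j : ℕ) < 2 * l then ((d i).toFun ⟨(j : ℕ), h⟩).val else f i with hFdef
  have hFlt : ∀ i (j : Fin (2 * l + 1)) (h : (j : ℕ) < 2 * l),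
      F i j = ((d i).toFun ⟨(j : ℕ), h⟩).val := fun i j h => dif_pos h
  have hFge : ∀ i (j : Fin (2 * l + 1)), ¬ (j : ℕ) < 2 * l → F i j = f i :=
    fun i j h => dif_neg h
  have hFinj : ∀ i, Function.Injective (F i) := by
    intro i j j' h
    by_cases hj : (j : ℕ) < 2 * l <;> by_cases hj' : (j' : ℕ) < 2 * l
    · rw [hFlt i j hj, hFlt i j' hj'] at h
      have h2 := (d i).inj (Subtype.ext h)
      exact Fin.ext (Fin.mk.inj_iff.mp h2)
    · exfalso
      rw [hFlt i j hj, hFge i j' hj'] at h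
      apply hnotL i ⟨(j : ℕ), hj⟩
      rw [h]; exact hfL i
    · exfalso
      rw [hFge i j hj, hFlt i j' hj'] at h
      apply hnotL i ⟨(j' : ℕ), hj'⟩
      rw [← h]; exact hfL i
    · have := j.isLt; have := j'.isLt
      apply Fin.ext; omega
  have key : ∀ i (a b : Fin (2 * l + 1)), (b : ℕ) = ((a : ℕ) + 1) % (2 * l + 1) →
      G.Adj (F i a) (F i b) := by
    intro i a b hb
    have hal := a.isLt
    by_cases h1 : (a : ℕ) + 1 < 2 * l
    · have ha : (a : ℕ) < 2 * l := by omega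
      have hbv : (b : ℕ) = (a : ℕ) + 1 := by
        rw [hb]; exact Nat.mod_eq_of_lt (by omega)
      have hbl : (b : ℕ) < 2 * l := by omega
      rw [hFlt i a ha, hFlt i b hbl]
      have hadj2 : (commonNbrGraph G L k).Adj
          ((d i).toFun ⟨(a : ℕ), ha⟩) ((d i).toFun ⟨(b : ℕ), hbl⟩) := by
        apply (d i).adj
        rw [cyc_adj_iff' h2l]
        left
        show (b : ℕ) = ((a : ℕ) + 1) % (2 * l)
        rw [hbv]; exact (Nat.mod_eq_of_lt h1).symm
      exact hadj2.1
    · by_cases h2 : (a : ℕ) < 2 * l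
      · have ha1 : (a : ℕ) = 2 * l - 1 := by omega
        have hbv : (b : ℕ) = 2 * l := by
          have h3 : (a : ℕ) + 1 = 2 * l := by omega
          rw [hb, h3]; exact Nat.mod_eq_of_lt (by omega)
        rw [hFlt i a h2, hFge i b (by omega)]
        have e : (⟨(a : ℕ), h2⟩ : Fin (2 * l)) = ⟨2 * l - 1, hlast⟩ := Fin.ext ha1
        rw [e]
        exact (hfS i).2.1
      · have ha1 : (a : ℕ) = 2 * l := by omega
        have hbv : (b : ℕ) = 0 := by
          rw [hb, ha1]; simp
        have hbl : (b : ℕ) < 2 * l := by omega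
        rw [hFge i a (by omega), hFlt i b hbl]
        have e : (⟨(b : ℕ), hbl⟩ : Fin (2 * l)) = ⟨0, h0⟩ := Fin.ext hbv
        rw [e]
        exact ((hfS i).2.2).symm
  have hFadj : ∀ i (a b : Fin (2 * l + 1)),
      (cycleGraph (2 * l + 1)).Adj a b → G.Adj (F i a) (F i b) := by
    intro i a b hab
    rw [cyc_adj_iff' (by omega)] at hab
    rcases hab with h | h
    · exact key i a b h
    · exact (key i b a h).symm
  apply hfree
  refine ⟨fun i => ⟨F i, hFinj i, fun {a b} hab => hFadj i a b hab⟩, ?_⟩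
  intro i i' hne
  rw [Set.disjoint_left]
  rintro x ⟨j, rfl⟩ ⟨j', hj'⟩
  simp only at hj'
  by_cases hj1 : (j : ℕ) < 2 * l <;> by_cases hj2 : (j' : ℕ) < 2 * l
  · rw [hFlt i j hj1, hFlt i' j' hj2] at hj'
    have heq : (d i').toFun ⟨(j' : ℕ), hj2⟩ = (d i).toFun ⟨(j : ℕ), hj1⟩ :=
      Subtype.ext hj'
    exact Set.disjoint_left.mp (hd i' i hne.symm) ⟨⟨(j' : ℕ), hj2⟩, heq⟩
      ⟨⟨(j : ℕ), hj1⟩, rfl⟩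
  · rw [hFlt i j hj1, hFge i' j' hj2] at hj'
    apply hnotL i ⟨(j : ℕ), hj1⟩
    rw [← hj']; exact hfL i'
  · rw [hFge i j hj1, hFlt i' j' hj2] at hj'
    apply hnotL i' ⟨(j' : ℕ), hj2⟩
    rw [hj']; exact hfL i
  · rw [hFge i j hj1, hFge i' j' hj2] at hj'
    exact hne (hfinj hj').symm
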